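/- Let Γ act by isometries on a geodesic metric space X, let B be a closed ball of radius R around z₀ with X = ∪_{γ∈Γ} γB, let S = {s ∈ Γ : sB ∩ B ≠ ∅}, and suppose S is finite and r = inf{d(B, γB) : γ ∈ Γ∖S} > 0. Then for every γ ∈ Γ, the word length satisfies ℓ_S(γ) ≤ (1/r) d(z₀, γ z₀) + 1. -/

import Mathlib

open Pointwise

/-- Word length of γ with respect to a generating set S. -/
noncomputable def wordLength {G : Type*} [Group G] (S : Set G) (γ : G) : ℕ :=
  sInf {n | ∃ L : List G, (∀ s ∈ L, s ∈ S) ∧ L.prod = γ ∧ L.length = n}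

lemma prod_telescope {G : Type*} [Group G] (f : ℕ → G) :
    ∀ n : ℕ, ((List.range n).map (fun i => (f i)⁻¹ * f (i + 1))).prod = (f 0)⁻¹ * f n := by
  intro n
  induction n with
  | zero => simp
  | succ n ih =>
    rw [List.range_succ, List.map_append, List.prod_append, ih]
    simp [mul_assoc]

/-- Švarc–Milnor type estimate: if Γ acts by isometries on a geodesic metric space X,
B is the closed ball of radius R around z₀ with X = ∪ γB, S = {s : sB ∩ B ≠ ∅} is finite
and r = inf{d(B,γB) : γ ∉ S} > 0, then ℓ_S(γ) ≤ (1/r) d(z₀, γz₀) + 1. -/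
theorem svarc_milnor_wordLength {Γ X : Type*} [Group Γ] [MetricSpace X] [MulAction Γ X]
    (hiso : ∀ (γ : Γ) (x y : X), dist (γ • x) (γ • y) = dist x y)
    (hgeo : ∀ x y : X, ∃ g : ℝ → X, g 0 = x ∧ g (dist x y) = y ∧
      ∀ s t : ℝ, 0 ≤ s → s ≤ dist x y → 0 ≤ t → t ≤ dist x y → dist (g s) (g t) = |s - t|)
    (z₀ : X) (R : ℝ) (hR : 0 < R)
    (hcover : ∀ x : X, ∃ γ : Γ, x ∈ γ • Metric.closedBall z₀ R)
    (S : Set Γ) (hS : S = {s : Γ | (s • Metric.closedBall z₀ R ∩ Metric.closedBall z₀ R).Nonempty})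
    (hSfin : S.Finite) (r : ℝ) (hr : 0 < r)
    (hrinf : ∀ γ : Γ, γ ∉ S → ∀ x ∈ Metric.closedBall z₀ R, ∀ y ∈ γ • Metric.closedBall z₀ R,
      r ≤ dist x y) :
    ∀ γ : Γ, (wordLength S γ : ℝ) ≤ (1 / r) * dist z₀ (γ • z₀) + 1 := by
  intro γ
  set B := Metric.closedBall z₀ R with hB
  set d : ℝ := dist z₀ (γ • z₀) with hd
  have hd0 : 0 ≤ d := dist_nonneg
  obtain ⟨g, hg0, hgd, hgdist⟩ := hgeo z₀ (γ • z₀)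
  set n : ℕ := ⌊d / r⌋₊ + 1 with hn
  have hnpos : 0 < n := Nat.succ_pos _
  have hnR : (0 : ℝ) < n := by exact_mod_cast hnpos
  have hdn : d < n * r := by
    have h1 : d / r < (n : ℝ) := by
      rw [hn]; push_cast; exact Nat.lt_floor_add_one _
    calc d = (d / r) * r := by field_simp
    _ < n * r := by exact mul_lt_mul_of_pos_right h1 hr
  have hnle : (n : ℝ) ≤ d / r + 1 := by
    rw [hn]; push_cast
    exact add_le_add_left (Nat.floor_le (div_nonneg hd0 hr.le)) 1
  -- subdivision points
  set t : ℕ → ℝ := fun i => i * d / n with ht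
  have ht0 : ∀ i, 0 ≤ t i := fun i =>
    div_nonneg (mul_nonneg (Nat.cast_nonneg i) hd0) hnR.le
  have htd : ∀ i ≤ n, t i ≤ d := by
    intro i hi
    rw [ht]
    rw [div_le_iff₀ hnR]
    have : (i : ℝ) ≤ n := by exact_mod_cast hi
    calc (i : ℝ) * d ≤ n * d := mul_le_mul_of_nonneg_right this hd0
    _ = d * n := mul_comm _ _
  have hz₀B : z₀ ∈ B := Metric.mem_closedBall_self hR.le
  -- the translates
  have hf : ∀ i, ∃ δ : Γ, g (t i) ∈ δ • B := fun i => hcover (g (t i))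
  classical
  set f : ℕ → Γ := fun i =>
    if i = 0 then 1 else if i = n then γ else Classical.choose (hf i) with hfdef
  have hf0 : f 0 = 1 := by simp [hfdef]
  have hfn : f n = γ := by simp [hfdef, hnpos.ne']
  have htn : t n = d := by
    show (n : ℝ) * d / n = d
    field_simp
  have hmem : ∀ i ≤ n, g (t i) ∈ f i • B := by
    intro i hi
    rcases eq_or_ne i 0 with h0 | h0
    · rw [h0, hf0, one_smul]
      have h : t 0 = 0 := by simp [ht]
      rw [h, hg0]
      exact hz₀B
    rcases eq_or_ne i n with h1 | h1
    · rw [h1, hfn, htn]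
      show g (dist z₀ (γ • z₀)) ∈ γ • B
      rw [hgd]
      exact Set.smul_mem_smul_set hz₀B
    · rw [hfdef]
      simp only [if_neg h0, if_neg h1]
      exact Classical.choose_spec (hf i)
  -- consecutive point distances
  have hstep : ∀ i, i < n → dist (g (t i)) (g (t (i + 1))) < r := by
    intro i hi
    have := hgdist (t i) (t (i + 1)) (ht0 i) (htd i hi.le) (ht0 (i + 1)) (htd (i + 1) hi)
    rw [this]
    have : t i - t (i + 1) = -(d / n) := by
      rw [ht]; push_cast; ring
    rw [this, abs_neg, abs_of_nonneg (div_nonneg hd0 hnR.le)]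
    rw [div_lt_iff₀ hnR]
    calc d < n * r := hdn
    _ = r * n := mul_comm _ _
  -- consecutive quotients in S
  have hSmem : ∀ i, i < n → (f i)⁻¹ * f (i + 1) ∈ S := by
    intro i hi
    by_contra hcon
    have h1 : (f i)⁻¹ • g (t i) ∈ B :=
      Set.mem_smul_set_iff_inv_smul_mem.mp (hmem i hi.le)
    have h2 : (f i)⁻¹ • g (t (i + 1)) ∈ ((f i)⁻¹ * f (i + 1)) • B := by
      rw [mul_smul]
      exact Set.smul_mem_smul_set (hmem (i + 1) hi)
    have := hrinf _ hcon _ h1 _ h2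
    rw [hiso] at this
    exact absurd this (not_le.mpr (hstep i hi))
  -- build the word
  set L : List Γ := (List.range n).map (fun i => (f i)⁻¹ * f (i + 1)) with hL
  have hLprod : L.prod = γ := by
    rw [hL, prod_telescope f n, hfdef]
    simp [hnpos.ne']
  have hLlen : L.length = n := by simp [hL]
  have hLS : ∀ s ∈ L, s ∈ S := by
    intro s hs
    rw [hL, List.mem_map] at hs
    obtain ⟨i, hi, rfl⟩ := hs
    exact hSmem i (List.mem_range.mp hi)
  have hword : wordLength S γ ≤ n := Nat.sInf_le ⟨L, hLS, hLprod, hLlen⟩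
  calc (wordLength S γ : ℝ) ≤ n := by exact_mod_cast hword
  _ ≤ d / r + 1 := hnle
  _ = (1 / r) * d + 1 := by ring
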